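/- Let D be a positive definite density matrix (D > 0, Tr D = 1), and let B = B* with Tr B = 0. For any finite collection of positive semidefinite matrices {E_i} with Σᵢ Eᵢ = I, one has Σᵢ (Tr B Eᵢ)² / (Tr D Eᵢ) ≤ Tr B J_D⁻¹(B), where J_D(C) = (DC + CD)/2. -/

import Mathlib

open Matrix
open scoped ComplexOrder
open scoped MatrixOrder

lemma trace_form {n : ℕ} (A B : Matrix (Fin n) (Fin n) ℂ) :
    (Aᴴ * B).trace = ∑ p : Fin n × Fin n, (starRingEnd ℂ) (A p.1 p.2) * B p.1 p.2 := by
  rw [Fintype.sum_prod_type]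
  simp only [Matrix.trace, Matrix.mul_apply, Matrix.diag, Matrix.conjTranspose_apply]
  rw [Finset.sum_comm]
  rfl

lemma re_trace_self {n : ℕ} (A : Matrix (Fin n) (Fin n) ℂ) :
    (Aᴴ * A).trace = ((∑ p : Fin n × Fin n, Complex.normSq (A p.1 p.2) : ℝ) : ℂ) := by
  rw [trace_form]
  push_cast
  exact Finset.sum_congr rfl fun p _ => (Complex.normSq_eq_conj_mul_self (z := A p.1 p.2)).symm

lemma cs_sum {ι : Type*} [Fintype ι] (x y : ι → ℂ) :
    ‖∑ i, (starRingEnd ℂ) (x i) * y i‖ ^ 2 ≤ (∑ i, ‖x i‖ ^ 2) * (∑ i, ‖y i‖ ^ 2) := by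
  have h := norm_inner_le_norm (𝕜 := ℂ) ((WithLp.equiv 2 (ι → ℂ)).symm x) ((WithLp.equiv 2 (ι → ℂ)).symm y)
  rw [PiLp.inner_apply] at h
  simp only [RCLike.inner_apply, WithLp.equiv_symm_apply, WithLp.ofLp_toLp, PiLp.toLp_apply, mul_comm (y _)] at h
  have hx : ‖(WithLp.equiv 2 (ι → ℂ)).symm x‖ ^ 2 = ∑ i, ‖x i‖ ^ 2 := by
    rw [EuclideanSpace.norm_eq, Real.sq_sqrt (by positivity)]
    simp [WithLp.equiv_symm_apply]
  have hy : ‖(WithLp.equiv 2 (ι → ℂ)).symm y‖ ^ 2 = ∑ i, ‖y i‖ ^ 2 := by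
    rw [EuclideanSpace.norm_eq, Real.sq_sqrt (by positivity)]
    simp [WithLp.equiv_symm_apply]
  calc ‖∑ i, (starRingEnd ℂ) (x i) * y i‖ ^ 2 ≤ (‖(WithLp.equiv 2 (ι → ℂ)).symm x‖ * ‖(WithLp.equiv 2 (ι → ℂ)).symm y‖)^2 := by
        apply pow_le_pow_left₀ (norm_nonneg _) h
    _ = (∑ i, ‖x i‖ ^ 2) * (∑ i, ‖y i‖ ^ 2) := by rw [mul_pow, hx, hy]

lemma re_trace_self' {n : ℕ} (X : Matrix (Fin n) (Fin n) ℂ) :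
    (Xᴴ * X).trace.re = ∑ p : Fin n × Fin n, ‖X p.1 p.2‖ ^ 2 := by
  rw [re_trace_self, Complex.ofReal_re]
  exact Finset.sum_congr rfl fun p _ => by
    rw [← Complex.sq_norm]

lemma re_trace_self_nonneg {n : ℕ} (X : Matrix (Fin n) (Fin n) ℂ) :
    0 ≤ (Xᴴ * X).trace.re := by
  rw [re_trace_self']; positivity

lemma eq_zero_of_re_trace_self {n : ℕ} (X : Matrix (Fin n) (Fin n) ℂ)
    (h : (Xᴴ * X).trace.re = 0) : X = 0 := by
  rw [re_trace_self'] at h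
  ext i j
  have := (Finset.sum_eq_zero_iff_of_nonneg (fun p _ => by positivity)).mp h (i, j)
    (Finset.mem_univ _)
  simpa [pow_eq_zero_iff] using this

lemma trace_cs {n : ℕ} (X Y : Matrix (Fin n) (Fin n) ℂ) :
    ‖(Xᴴ * Y).trace‖ ^ 2 ≤ (Xᴴ * X).trace.re * (Yᴴ * Y).trace.re := by
  rw [re_trace_self', re_trace_self', trace_form]
  exact cs_sum _ _

lemma herm_of_lyap {n : ℕ} (D : Matrix (Fin n) (Fin n) ℂ) (hD : D.PosDef)
    (B C : Matrix (Fin n) (Fin n) ℂ) (hB : B.IsHermitian)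
    (hC : (1 / 2 : ℂ) • (D * C + C * D) = B) : C.IsHermitian := by
  have hDh : D.IsHermitian := hD.1
  set S := CFC.sqrt D with hSdef
  have hS : S * S = D := CFC.sqrt_mul_sqrt_self D hD.posSemidef.nonneg
  have hSh : S.IsHermitian := (CFC.sqrt_nonneg D).posSemidef.1
  set X := C - Cᴴ with hXdef
  have e1 : D * C + C * D = (2 : ℂ) • B := by
    rw [← hC, smul_smul]; norm_num
  have e2 : D * Cᴴ + Cᴴ * D = (2 : ℂ) • B := by
    have h := congrArg conjTranspose hC
    simp only [conjTranspose_smul, conjTranspose_add, conjTranspose_mul, hDh.eq, hB.eq] at h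
    have h2 : (1 / 2 : ℂ) • (Cᴴ * D + D * Cᴴ) = B := by
      convert h using 2
      simp [starRingEnd_apply]
    rw [add_comm] at h2
    rw [← h2, smul_smul]; norm_num
  have hX : D * X + X * D = 0 := by
    simp only [hXdef, mul_sub, sub_mul]
    rw [show D * C - D * Cᴴ + (C * D - Cᴴ * D)
        = (D * C + C * D) - (D * Cᴴ + Cᴴ * D) by abel, e1, e2, sub_self]
  have key : (Xᴴ * (D * X)).trace + (Xᴴ * (X * D)).trace = 0 := by
    rw [← Matrix.trace_add, ← Matrix.mul_add, hX, Matrix.mul_zero, Matrix.trace_zero]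
  have t1 : ((S * X)ᴴ * (S * X)).trace = (Xᴴ * (D * X)).trace := by
    rw [conjTranspose_mul, hSh.eq, Matrix.mul_assoc, ← Matrix.mul_assoc S S X, hS]
  have t2 : ((X * S)ᴴ * (X * S)).trace = (Xᴴ * (X * D)).trace := by
    rw [conjTranspose_mul, hSh.eq, Matrix.mul_assoc]
    rw [Matrix.trace_mul_comm]
    rw [Matrix.mul_assoc, Matrix.mul_assoc, hS, ← Matrix.mul_assoc]
  have hre : ((S * X)ᴴ * (S * X)).trace.re + ((X * S)ᴴ * (X * S)).trace.re = 0 := by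
    rw [t1, t2, ← Complex.add_re, key, Complex.zero_re]
  have h1 : ((S * X)ᴴ * (S * X)).trace.re = 0 :=
    le_antisymm (by linarith [re_trace_self_nonneg (X * S)]) (re_trace_self_nonneg (S * X))
  have hSX : S * X = 0 := eq_zero_of_re_trace_self _ h1
  have hDX : D * X = 0 := by rw [← hS, Matrix.mul_assoc, hSX, Matrix.mul_zero]
  have hXz : X = 0 := by
    have hdet : IsUnit D.det := isUnit_iff_ne_zero.mpr hD.det_pos.ne'
    calc X = D⁻¹ * (D * X) := by rw [← Matrix.mul_assoc, Matrix.nonsing_inv_mul D hdet, Matrix.one_mul]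
    _ = 0 := by rw [hDX, Matrix.mul_zero]
  have : Cᴴ = C := by
    have := sub_eq_zero.mp hXz
    exact this.symm
  exact this

theorem stmt6 {n : ℕ} (D : Matrix (Fin n) (Fin n) ℂ) (hD : D.PosDef) (hDtr : D.trace = 1)
    (B : Matrix (Fin n) (Fin n) ℂ) (hB : B.IsHermitian) (hBtr : B.trace = 0)
    (C : Matrix (Fin n) (Fin n) ℂ) (hC : (1 / 2 : ℂ) • (D * C + C * D) = B)
    (k : ℕ) (E : Fin k → Matrix (Fin n) (Fin n) ℂ)
    (hE : ∀ i, (E i).PosSemidef) (hEsum : ∑ i, E i = 1) :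
    ∑ i, ((B * E i).trace.re) ^ 2 / ((D * E i).trace.re) ≤ (B * C).trace.re := by
  have hCh : C.IsHermitian := herm_of_lyap D hD B C hB hC
  have hDh : D.IsHermitian := hD.1
  set S := CFC.sqrt D with hSdef
  have hS : S * S = D := CFC.sqrt_mul_sqrt_self D hD.posSemidef.nonneg
  have hSh : S.IsHermitian := (CFC.sqrt_nonneg D).posSemidef.1
  have main : ∀ i, ((B * E i).trace.re) ^ 2 / ((D * E i).trace.re)
      ≤ (C * (D * (C * E i))).trace.re := by
    intro i
    set F := CFC.sqrt (E i) with hFdef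
    have hF : F * F = E i := CFC.sqrt_mul_sqrt_self (E i) (hE i).nonneg
    have hFh : F.IsHermitian := (CFC.sqrt_nonneg (E i)).posSemidef.1
    set X := S * F with hXdef
    set Y := S * (C * F) with hYdef
    have hXX : (Xᴴ * X).trace = (D * E i).trace := by
      rw [hXdef, conjTranspose_mul, hSh.eq, hFh.eq]
      simp only [Matrix.mul_assoc]
      rw [← Matrix.mul_assoc S S, hS]
      rw [Matrix.trace_mul_comm]
      simp only [Matrix.mul_assoc]
      rw [hF]
    have hXY : (Xᴴ * Y).trace = (D * (C * E i)).trace := by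
      rw [hXdef, hYdef, conjTranspose_mul, hSh.eq, hFh.eq]
      simp only [Matrix.mul_assoc]
      rw [← Matrix.mul_assoc S S, hS]
      rw [Matrix.trace_mul_comm]
      simp only [Matrix.mul_assoc]
      rw [hF]
    have hYY : (Yᴴ * Y).trace = (C * (D * (C * E i))).trace := by
      rw [hYdef, conjTranspose_mul, conjTranspose_mul, hSh.eq, hFh.eq, hCh.eq]
      simp only [Matrix.mul_assoc]
      rw [← Matrix.mul_assoc S S, hS]
      rw [Matrix.trace_mul_comm]
      simp only [Matrix.mul_assoc]
      rw [hF]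
    have hconj : (D * (C * E i))ᴴ = E i * (C * D) := by
      simp only [conjTranspose_mul, hCh.eq, hDh.eq, (hE i).1.eq, Matrix.mul_assoc]
    have hstar : ((C * D) * E i).trace = star ((D * (C * E i)).trace) := by
      rw [← Matrix.trace_conjTranspose, hconj, Matrix.trace_mul_comm]
    have hBE : (B * E i).trace.re = ((D * (C * E i)).trace).re := by
      rw [← hC, Matrix.smul_mul, Matrix.trace_smul, add_mul, Matrix.trace_add,
        Matrix.mul_assoc D C, hstar, Complex.star_def, Complex.add_conj]
      simp [smul_eq_mul]
    have cs := trace_cs X Y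
    rw [hXX, hXY, hYY] at cs
    have hzre : ((D * (C * E i)).trace.re) ^ 2 ≤ ‖(D * (C * E i)).trace‖ ^ 2 := by
      rw [← sq_abs]
      apply pow_le_pow_left₀ (abs_nonneg _)
      exact Complex.abs_re_le_norm _
    have hb : 0 ≤ (D * E i).trace.re := hXX ▸ re_trace_self_nonneg X
    have hc : 0 ≤ (C * (D * (C * E i))).trace.re := hYY ▸ re_trace_self_nonneg Y
    rw [hBE]
    rcases hb.eq_or_lt with h0 | hpos
    · rw [← h0, div_zero]; exact hc
    · rw [div_le_iff₀ hpos]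
      nlinarith [cs, hzre]
  have sum_eq : ∑ i, (C * (D * (C * E i))).trace = (B * C).trace := by
    rw [← Matrix.trace_sum]
    simp only [← Matrix.mul_assoc]
    rw [← Finset.mul_sum, hEsum, mul_one]
    rw [← hC, Matrix.smul_mul, Matrix.trace_smul, add_mul, Matrix.trace_add]
    rw [Matrix.trace_mul_comm (D * C) C, ← Matrix.mul_assoc]
    simp [smul_eq_mul]
    ring
  calc ∑ i, ((B * E i).trace.re) ^ 2 / ((D * E i).trace.re)
      ≤ ∑ i, (C * (D * (C * E i))).trace.re := Finset.sum_le_sum fun i _ => main i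
    _ = (B * C).trace.re := by rw [← Complex.re_sum, sum_eq]
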